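/- Let α > 0, σ > 0 and set τ := (1/α)·σ/(1+σ). Let T > 0 and let x, e : [0,T] → ℝⁿ be differentiable functions such that e(0) = 0, e′(t) = −x′(t) for all t ∈ [0,T], ‖x′(t)‖ ≤ α·(‖x(t)‖ + ‖e(t)‖) for all t ∈ [0,T], and x(t) ≠ 0 for all t ∈ [0,T]. Then ‖e(t)‖ ≤ σ·‖x(t)‖ for all t ∈ [0, min(T, τ)]. -/

import Mathlib

open Matrix

open Set Filter Topology in
theorem stmt_6 (n : ℕ) (α σ τ : ℝ) (hα : 0 < α) (hσ : 0 < σ)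
    (hτ : τ = (1 / α) * (σ / (1 + σ)))
    (T : ℝ) (hT : 0 < T)
    (x e x' e' : ℝ → EuclideanSpace ℝ (Fin n))
    (hx : ∀ t ∈ Set.Icc (0 : ℝ) T, HasDerivWithinAt x (x' t) (Set.Icc 0 T) t)
    (he : ∀ t ∈ Set.Icc (0 : ℝ) T, HasDerivWithinAt e (e' t) (Set.Icc 0 T) t)
    (he0 : e 0 = 0)
    (hee : ∀ t ∈ Set.Icc (0 : ℝ) T, e' t = -x' t)
    (hbound : ∀ t ∈ Set.Icc (0 : ℝ) T, ‖x' t‖ ≤ α * (‖x t‖ + ‖e t‖))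
    (hxne : ∀ t ∈ Set.Icc (0 : ℝ) T, x t ≠ 0) :
    ∀ t ∈ Set.Icc (0 : ℝ) (min T τ), ‖e t‖ ≤ σ * ‖x t‖ := by
  have h1σ : (0:ℝ) < 1 + σ := by linarith
  have hτpos : 0 < τ := by rw [hτ]; positivity
  have hατ : α * τ = σ / (1 + σ) := by rw [hτ]; field_simp
  have hατ1 : α * τ < 1 := by rw [hατ, div_lt_one h1σ]; linarith
  set b' := min T τ with hb'
  have hbT : b' ≤ T := min_le_left _ _
  have hbτ : b' ≤ τ := min_le_right _ _
  have hsub : Icc (0:ℝ) b' ⊆ Icc 0 T := Icc_subset_Icc le_rfl hbT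
  -- e + x is constant
  have hconst : ∀ s ∈ Icc (0:ℝ) T, e s + x s = x 0 := by
    have hcont : ContinuousOn (fun t => e t + x t) (Icc 0 T) :=
      fun s hs => ((he s hs).add (hx s hs)).continuousWithinAt
    have hderiv : ∀ s ∈ Ico (0:ℝ) T, HasDerivWithinAt (fun t => e t + x t) 0 (Ici s) s := by
      intro s hs
      have hsIcc : s ∈ Icc (0:ℝ) T := ⟨hs.1, hs.2.le⟩
      have h := (he s hsIcc).add (hx s hsIcc)
      rw [hee s hsIcc, neg_add_cancel] at h
      refine h.mono_of_mem_nhdsWithin ?_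
      rw [mem_nhdsWithin]
      exact ⟨Iio T, isOpen_Iio, hs.2, fun z hz => ⟨le_trans hs.1 hz.2, hz.1.le⟩⟩
    intro s hs
    have := constant_of_has_deriv_right_zero hcont hderiv s hs
    simpa [he0] using this
  have hxcont : ContinuousOn x (Icc 0 T) := fun s hs => (hx s hs).continuousWithinAt
  have hecont : ContinuousOn e (Icc 0 T) := fun s hs => (he s hs).continuousWithinAt
  -- key comparison for β > α
  have key : ∀ β : ℝ, α < β → β * τ < 1 →
      ∀ t ∈ Icc (0:ℝ) b', ‖e t‖ / ‖x t‖ ≤ β * τ / (1 - β * τ) := by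
    intro β hαβ hβτ t ht
    have hβpos : 0 < β := hα.trans hαβ
    have hden : ∀ s ∈ Icc (0:ℝ) b', 0 < 1 - β * s := by
      intro s hs
      have h1 : β * s ≤ β * τ := by nlinarith [hs.2.trans hbτ]
      linarith
    set f : ℝ → ℝ := fun s => ‖e s‖ / ‖x s‖ with hf_def
    set B : ℝ → ℝ := fun s => β * s / (1 - β * s) with hB_def
    have hmain : ∀ ⦃s⦄, s ∈ Icc (0:ℝ) b' → f s ≤ B s := by
      refine image_le_of_liminf_slope_right_lt_deriv_boundary'
        (f := f) (f' := fun s => α * (1 + f s)^2) (B := B)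
        (B' := fun s => β / (1 - β * s)^2) ?hf ?hf' ?ha ?hB ?hB' ?bnd
      case hf =>
        exact ((continuous_norm.comp_continuousOn (hecont.mono hsub)).div
          (continuous_norm.comp_continuousOn (hxcont.mono hsub))
          (fun s hs => norm_ne_zero_iff.2 (hxne s (hsub hs))))
      case ha => simp [f, B, he0]
      case hB =>
        exact (continuousOn_const.mul continuousOn_id).div
          (continuousOn_const.sub (continuousOn_const.mul continuousOn_id))
          (fun s hs => (hden s hs).ne')
      case hB' =>
        intro s hs
        have hd : 1 - β * s ≠ 0 := (hden s ⟨hs.1, hs.2.le⟩).ne'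
        have h1 : HasDerivAt (fun u : ℝ => β*u) β s := by simpa using (hasDerivAt_id s).const_mul β
        have h2 : HasDerivAt (fun u : ℝ => 1 - β*u) (-β) s := by
          exact h1.const_sub 1
        have h3 := h1.div h2 hd
        have h4 : HasDerivAt B (β/(1-β*s)^2) s := by
          rw [show β/(1-β*s)^2 = (β * (1 - β * s) - β * s * -β) / (1 - β * s) ^ 2 by ring]
          exact h3
        exact h4.hasDerivWithinAt
      case bnd =>
        intro s hs hfB
        show α * (1 + f s)^2 < β / (1 - β * s)^2
        have hd : 0 < 1 - β * s := hden s ⟨hs.1, hs.2.le⟩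
        have h1B : 1 + B s = 1 / (1 - β * s) := by
          simp only [B]; field_simp; ring
        rw [hfB, h1B, div_pow, one_pow, mul_one_div]
        gcongr
      case hf' =>
        intro s hs r hr
        have hsIcc : s ∈ Icc (0:ℝ) T := hsub ⟨hs.1, hs.2.le⟩
        have hsT : s < T := lt_of_lt_of_le hs.2 hbT
        set a := ‖e s‖ with ha_def
        set b := ‖x s‖ with hbb_def
        have hb : 0 < b := norm_pos_iff.2 (hxne s hsIcc)
        have ha0 : 0 ≤ a := norm_nonneg _
        have hfs : f s = a / b := rfl
        have hr : α * (1 + a / b)^2 < r := hr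
        have hmem1 : Icc 0 T \ {s} ∈ 𝓝[>] s := by
          refine mem_of_superset (Ioc_mem_nhdsGT_of_mem ⟨le_rfl, hsT⟩) ?_
          exact fun z hz => ⟨⟨le_trans hsIcc.1 hz.1.le, hz.2⟩, by simpa using hz.1.ne'⟩
        have hmem2 : Icc (0:ℝ) T ∈ 𝓝[>] s := mem_of_superset hmem1 diff_subset
        have T1 : Tendsto (slope x s) (𝓝[>] s) (𝓝 (x' s)) :=
          (hasDerivWithinAt_iff_tendsto_slope.mp (hx s hsIcc)).mono_left
            (nhdsWithin_le_of_mem hmem1)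
        have T2 : Tendsto (fun z => ‖x z‖) (𝓝[>] s) (𝓝 b) :=
          ((hxcont s hsIcc).mono_left (nhdsWithin_le_of_mem hmem2)).norm
        have T3 : Tendsto (fun z => (a + b) / (b * ‖x z‖) * ‖slope x s z‖) (𝓝[>] s)
            (𝓝 ((a + b) / (b * b) * ‖x' s‖)) :=
          (tendsto_const_nhds.div (T2.const_mul b) (by positivity)).mul T1.norm
        have hlim_lt : (a + b) / (b * b) * ‖x' s‖ < r := by
          have h1 : ‖x' s‖ ≤ α * (b + a) := hbound s hsIcc
          have h2 : (a + b) / (b * b) * ‖x' s‖ ≤ (a + b) / (b * b) * (α * (b + a)) :=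
            mul_le_mul_of_nonneg_left h1 (by positivity)
          have heq2 : (a + b) / (b * b) * (α * (b + a)) = α * (1 + a / b)^2 := by
            field_simp; ring
          exact lt_of_le_of_lt (h2.trans_eq heq2) hr
        have ev1 := T3.eventually_lt_const hlim_lt
        have ev2 := T2.eventually_const_lt (half_lt_self hb)
        have ev3 : ∀ᶠ z in 𝓝[>] s, z ∈ Ioc s T := Ioc_mem_nhdsGT_of_mem ⟨le_rfl, hsT⟩
        refine Filter.Eventually.frequently ?_
        filter_upwards [ev1, ev2, ev3] with z h1 h2 h3
        have hzIcc : z ∈ Icc (0:ℝ) T := ⟨le_trans hsIcc.1 h3.1.le, h3.2⟩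
        have hzs : 0 < z - s := sub_pos.2 h3.1
        have hxz : 0 < ‖x z‖ := lt_trans (half_pos hb) h2
        have hdiff : e z - e s = x s - x z := by
          have h4 : e z + x z = e s + x s := (hconst z hzIcc).trans (hconst s hsIcc).symm
          rw [sub_eq_sub_iff_add_eq_add]
          rw [h4]; abel
        have hΔ : ‖e z - e s‖ = ‖x z - x s‖ := by rw [hdiff, norm_sub_rev]
        have i1 : ‖e z‖ ≤ a + ‖x z - x s‖ := by
          calc ‖e z‖ = ‖e s + (e z - e s)‖ := by congr 1; abel
            _ ≤ ‖e s‖ + ‖e z - e s‖ := norm_add_le _ _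
            _ = a + ‖x z - x s‖ := by rw [hΔ]
        have i2 : b - ‖x z - x s‖ ≤ ‖x z‖ := by
          have h5 := norm_sub_norm_le (x s) (x z)
          rw [norm_sub_rev] at h5
          linarith
        have hnum : b * ‖e z‖ - a * ‖x z‖ ≤ (a + b) * ‖x z - x s‖ := by
          nlinarith [mul_le_mul_of_nonneg_left i1 hb.le, mul_le_mul_of_nonneg_left i2 ha0]
        have heq : f z - f s = (b * ‖e z‖ - a * ‖x z‖) / (b * ‖x z‖) := by
          simp only [f]
          rw [div_sub_div _ _ (ne_of_gt hxz) (ne_of_gt hb)]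
          rw [mul_comm b ‖x z‖]
          rw [← ha_def]
          ring_nf
        have hfz : f z - f s ≤ (a + b) * ‖x z - x s‖ / (b * ‖x z‖) := by
          rw [heq]
          gcongr
        have hslx : ‖slope x s z‖ = ‖x z - x s‖ / (z - s) := by
          rw [slope]
          rw [norm_smul, norm_inv, Real.norm_eq_abs, abs_of_pos hzs]
          rw [div_eq_inv_mul]
          simp [vsub_eq_sub]
        calc slope f s z = (f z - f s) / (z - s) := slope_def_field f s z
          _ ≤ (a + b) * ‖x z - x s‖ / (b * ‖x z‖) / (z - s) := by gcongr
          _ = (a + b) / (b * ‖x z‖) * (‖x z - x s‖ / (z - s)) := by ring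
          _ = (a + b) / (b * ‖x z‖) * ‖slope x s z‖ := by rw [hslx]
          _ < r := h1
    -- conclude key
    have hBt := hmain ht
    have htτ : t ≤ τ := ht.2.trans hbτ
    have h1 : β * t ≤ β * τ := mul_le_mul_of_nonneg_left htτ hβpos.le
    have h2 : 0 < 1 - β * τ := by linarith
    have h3 : 1 - β * τ ≤ 1 - β * t := by linarith
    have hgoal : B t ≤ β * τ / (1 - β * τ) := div_le_div₀ (by positivity) h1 h2 h3
    calc ‖e t‖ / ‖x t‖ = f t := rfl
      _ ≤ B t := hBt
      _ ≤ β * τ / (1 - β * τ) := hgoal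
  -- final assembly
  intro t ht
  have htT : t ∈ Icc (0:ℝ) T := hsub ht
  have hxt : 0 < ‖x t‖ := norm_pos_iff.2 (hxne t htT)
  suffices h : ‖e t‖ / ‖x t‖ ≤ σ by
    rw [div_le_iff₀ hxt] at h
    linarith
  refine le_of_forall_pos_le_add ?_
  intro ε hε
  have hd0 : 1 - α * τ ≠ 0 := by linarith
  have hcont1 : ContinuousAt (fun β : ℝ => β * τ / (1 - β * τ)) α :=
    ContinuousAt.div (by fun_prop) (by fun_prop) hd0
  have hval : α * τ / (1 - α * τ) = σ := by
    have h9 : 1 - σ / (1 + σ) = 1 / (1 + σ) := by field_simp; ring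
    rw [hατ, h9]
    rw [div_div_div_cancel_right₀]
    · simp
    · exact h1σ.ne'
  have e1 : ∀ᶠ β in 𝓝 α, β * τ / (1 - β * τ) < σ + ε := by
    have ht1 := hcont1.tendsto
    rw [hval] at ht1
    exact ht1.eventually_lt_const (by linarith)
  have e2 : ∀ᶠ β in 𝓝 α, β * τ < 1 := by
    have hc : ContinuousAt (fun β : ℝ => β * τ) α := by fun_prop
    exact hc.tendsto.eventually_lt_const hατ1
  obtain ⟨β, ⟨hg1, hg2⟩, hg3⟩ :=
    (((e1.and e2).filter_mono (nhdsWithin_le_nhds (s := Ioi α))).and self_mem_nhdsWithin).exists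
  have := key β hg3 hg2 t ht
  linarith
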